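/- Assume the convictions are ordered, θ_1 ≤ θ_2 ≤ … ≤ θ_N, and let y be a Nash equilibrium. Then θ_1 ≤ y_1^p ≤ y_2^p ≤ … ≤ y_N^p ≤ θ_N; the lower bound y_i^p ≥ θ_i + (m_{≥i} − M)/σ holds for every i, where m_{≥i} = m_i + … + m_N; and for any pair i ≠ j one has θ_i = θ_j if and only if y_i = y_j. -/

import Mathlib

open Filter Topology Finset Real

/-- Structure of the Nash equilibrium under ordered convictions `θ_1 ≤ … ≤ θ_N`:
`θ_1 ≤ y_1^p ≤ … ≤ y_N^p ≤ θ_N`, the lower bound `y_i^p ≥ θ_i + (m_{≥i} - M)/σ` holds for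
all `i`, and `θ_i = θ_j ↔ y_i = y_j` for `i ≠ j`. -/
theorem nash_equilibrium_monotone_structure
    {N : ℕ} (hN : 0 < N)
    (m θ : Fin N → ℝ) (hm : ∀ i, 0 < m i) (hθ : ∀ i, 0 < θ i)
    (hmono : Monotone θ)
    {σ p : ℝ} (hσ : 0 < σ) (hp : 0 < p)
    (y : Fin N → ℝ) (hpos : ∀ i, 0 < y i)
    (heq : ∀ i, ∑ k, m k * (y k - y i) + σ * (θ i - y i ^ p) * y i = 0) :
    θ ⟨0, hN⟩ ≤ y ⟨0, hN⟩ ^ p ∧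
    (∀ i j : Fin N, i ≤ j → y i ^ p ≤ y j ^ p) ∧
    y ⟨N - 1, Nat.sub_lt hN Nat.one_pos⟩ ^ p ≤ θ ⟨N - 1, Nat.sub_lt hN Nat.one_pos⟩ ∧
    (∀ i, θ i + ((∑ k ∈ Finset.univ.filter (fun k => i ≤ k), m k) - ∑ k, m k) / σ
      ≤ y i ^ p) ∧
    (∀ i j : Fin N, i ≠ j → (θ i = θ j ↔ y i = y j)) := by
  set S : ℝ := ∑ k, m k * y k with hSdef
  set M : ℝ := ∑ k, m k with hMdef
  have hSpos : 0 < S :=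
    Finset.sum_pos (fun k _ => mul_pos (hm k) (hpos k)) ⟨⟨0, hN⟩, Finset.mem_univ _⟩
  have key : ∀ i, σ * (θ i - y i ^ p) * y i = M * y i - S := by
    intro i
    have h := heq i
    have h1 : ∑ k, m k * (y k - y i) = S - M * y i := by
      simp only [mul_sub, Finset.sum_sub_distrib, hSdef, hMdef, Finset.sum_mul]
    rw [h1] at h
    linarith
  -- monotonicity of y with respect to θ
  have ymono : ∀ i j : Fin N, θ i ≤ θ j → y i ≤ y j := by
    intro i j hij
    by_contra h
    push_neg at h
    have hp1 : y j ^ p < y i ^ p := Real.rpow_lt_rpow (hpos j).le h hp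
    have ki := key i
    have kj := key j
    have hd : σ * (θ i - y i ^ p) * y i * y j - σ * (θ j - y j ^ p) * y j * y i
        = S * (y i - y j) := by
      rw [ki, kj]; ring
    nlinarith [mul_pos (mul_pos hσ (hpos i)) (hpos j), mul_pos hSpos (sub_pos.mpr h),
      mul_pos (hpos i) (hpos j)]
  -- lower bound
  have lower : ∀ i, θ i + ((∑ k ∈ Finset.univ.filter (fun k => i ≤ k), m k) - M) / σ
      ≤ y i ^ p := by
    intro i
    set T : ℝ := ∑ k ∈ Finset.univ.filter (fun k => i ≤ k), m k with hTdef
    have hT : T * y i ≤ S := by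
      calc T * y i = ∑ k ∈ Finset.univ.filter (fun k => i ≤ k), m k * y i := by
            rw [Finset.sum_mul]
        _ ≤ ∑ k ∈ Finset.univ.filter (fun k => i ≤ k), m k * y k := by
            refine Finset.sum_le_sum fun k hk => ?_
            have hik : i ≤ k := (Finset.mem_filter.mp hk).2
            exact mul_le_mul_of_nonneg_left (ymono i k (hmono hik)) (hm k).le
        _ ≤ S := Finset.sum_le_sum_of_subset_of_nonneg (Finset.filter_subset _ _)
            (fun k _ _ => mul_nonneg (hm k).le (hpos k).le)
    have ki := key i
    have h2 : (T - M) * y i ≤ σ * (y i ^ p - θ i) * y i := by nlinarith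
    have h3 : T - M ≤ σ * (y i ^ p - θ i) := le_of_mul_le_mul_right h2 (hpos i)
    have h4 : (T - M) / σ ≤ y i ^ p - θ i := by
      rw [div_le_iff₀ hσ]; linarith
    linarith
  -- first claim from lower bound at index 0
  have first : θ ⟨0, hN⟩ ≤ y ⟨0, hN⟩ ^ p := by
    have hfil : Finset.univ.filter (fun k => (⟨0, hN⟩ : Fin N) ≤ k) = Finset.univ := by
      refine Finset.filter_true_of_mem fun k _ => ?_
      exact Fin.mk_le_mk.mpr (Nat.zero_le _)
    have := lower ⟨0, hN⟩
    rw [hfil] at this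
    simpa [hMdef] using this
  -- last claim
  have last : y ⟨N - 1, Nat.sub_lt hN Nat.one_pos⟩ ^ p
      ≤ θ ⟨N - 1, Nat.sub_lt hN Nat.one_pos⟩ := by
    set L : Fin N := ⟨N - 1, Nat.sub_lt hN Nat.one_pos⟩ with hL
    have hle : ∀ k : Fin N, y k ≤ y L := by
      intro k
      refine ymono k L (hmono ?_)
      exact Fin.mk_le_mk.mpr (Nat.le_pred_of_lt k.isLt)
    have hSle : S ≤ M * y L := by
      calc S ≤ ∑ k, m k * y L :=
            Finset.sum_le_sum fun k _ => mul_le_mul_of_nonneg_left (hle k) (hm k).le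
        _ = M * y L := by rw [hMdef, Finset.sum_mul]
    have kL := key L
    nlinarith [mul_pos hσ (hpos L), hpos L]
  refine ⟨first, ?_, last, lower, ?_⟩
  · intro i j hij
    exact Real.rpow_le_rpow (hpos i).le (ymono i j (hmono hij)) hp.le
  · intro i j _
    constructor
    · intro hθij
      exact le_antisymm (ymono i j hθij.le) (ymono j i hθij.ge)
    · intro hyij
      have ki := key i
      rw [hyij] at ki
      have kj := key j
      have h0 : σ * (θ i - θ j) * y j = 0 := by linear_combination ki - kj
      rcases mul_eq_zero.mp h0 with h1 | h1
      · rcases mul_eq_zero.mp h1 with h2 | h2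
        · exact absurd h2 hσ.ne'
        · linarith
      · exact absurd h1 (hpos j).ne'
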